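/- arXiv:2203.11837 — 7 statements merged into one kernel-verified Lean document; each statement's English description precedes it below -/
import Mathlib

section
/- For matrices A ∈ M_{m,n}(ℂ) and B ∈ M_{n,m}(ℂ), if there exists a Hermitian matrix P ∈ M_{n+m}(ℂ) such that [I, -A*] P [I; -A] ≺ 0 (negative definite) and [B*, I] P [B; I] ⪰ 0 (positive semidefinite), then det(I_m + A B) ≠ 0. -/
open Matrix ComplexOrder

theorem stmt1 {m n : ℕ} (A : Matrix (Fin m) (Fin n) ℂ) (B : Matrix (Fin n) (Fin m) ℂ)
    (P : Matrix (Fin n ⊕ Fin m) (Fin n ⊕ Fin m) ℂ) (hP : P.IsHermitian)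
    (h1 : (-((Matrix.fromRows (1 : Matrix (Fin n) (Fin n) ℂ) (-A))ᴴ * P *
        Matrix.fromRows (1 : Matrix (Fin n) (Fin n) ℂ) (-A))).PosDef)
    (h2 : ((Matrix.fromRows B (1 : Matrix (Fin m) (Fin m) ℂ))ᴴ * P *
        Matrix.fromRows B (1 : Matrix (Fin m) (Fin m) ℂ)).PosSemidef) :
    (1 + A * B).det ≠ 0 := by
  intro hdet
  obtain ⟨x, hx, hxe⟩ := (Matrix.exists_mulVec_eq_zero_iff).2 hdet
  set y : Fin n → ℂ := B *ᵥ x with hy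
  have hxy : A *ᵥ y = -x := by
    rw [add_mulVec, one_mulVec, ← mulVec_mulVec] at hxe
    have := eq_neg_of_add_eq_zero_right hxe
    rw [hy, this]
  have hyne : y ≠ 0 := by
    intro h0
    apply hx
    have : A *ᵥ y = 0 := by rw [h0, mulVec_zero]
    rw [this] at hxy
    simpa using hxy.symm
  set M := Matrix.fromRows B (1 : Matrix (Fin m) (Fin m) ℂ) with hM
  set N := Matrix.fromRows (1 : Matrix (Fin n) (Fin n) ℂ) (-A) with hN
  have hv2 : M *ᵥ x = Sum.elim y x := by
    rw [hM, fromRows_mulVec, one_mulVec, hy]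
  have hv1 : N *ᵥ y = Sum.elim y x := by
    rw [hN, fromRows_mulVec, one_mulVec, neg_mulVec, hxy, neg_neg]
  have e2 : star x ⬝ᵥ (Mᴴ * P * M) *ᵥ x = star (Sum.elim y x) ⬝ᵥ P *ᵥ (Sum.elim y x) := by
    rw [← mulVec_mulVec, ← mulVec_mulVec, dotProduct_mulVec (star x) Mᴴ, ← star_mulVec, hv2]
  have e1 : star y ⬝ᵥ (Nᴴ * P * N) *ᵥ y = star (Sum.elim y x) ⬝ᵥ P *ᵥ (Sum.elim y x) := by
    rw [← mulVec_mulVec, ← mulVec_mulVec, dotProduct_mulVec (star y) Nᴴ, ← star_mulVec, hv1]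
  have hle := h2.dotProduct_mulVec_nonneg x
  rw [e2] at hle
  have hlt := h1.dotProduct_mulVec_pos hyne
  rw [neg_mulVec, dotProduct_neg, e1] at hlt
  have : (0:ℂ) < 0 := lt_of_le_of_lt hle (by linarith [neg_pos.mp (by exact hlt)])
  exact lt_irrefl _ this
end

section
/- Let A, B be invertible n×n complex matrices. If there exists an invertible matrix H such that H A and H* B are both strictly accretive, then det(I + τ A B) ≠ 0 for every real τ ≥ 0. -/
open Matrix ComplexOrder

lemma aux_dot {n : ℕ} (M : Matrix (Fin n) (Fin n) ℂ) (x y : Fin n → ℂ) :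
    star x ⬝ᵥ (Mᴴ *ᵥ y) = star (star y ⬝ᵥ (M *ᵥ x)) := by
  simp only [dotProduct, mulVec, conjTranspose, of_apply, transpose_apply, map_apply,
    Finset.mul_sum, Finset.sum_mul, star_sum, star_mul', Pi.star_apply, star_star]
  rw [Finset.sum_comm]
  exact Finset.sum_congr rfl fun i _ => Finset.sum_congr rfl fun j _ => by ring

theorem stmt3 {n : ℕ} (A B : Matrix (Fin n) (Fin n) ℂ) (hA : IsUnit A) (hB : IsUnit B)
    (H : Matrix (Fin n) (Fin n) ℂ) (hH : IsUnit H)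
    (h1 : (H * A + (H * A)ᴴ).PosDef) (h2 : (Hᴴ * B + (Hᴴ * B)ᴴ).PosDef) :
    ∀ τ : ℝ, 0 ≤ τ → (1 + (τ : ℂ) • (A * B)).det ≠ 0 := by
  intro τ hτ hdet
  obtain ⟨v, hv, hveq⟩ := (Matrix.exists_mulVec_eq_zero_iff).2 hdet
  set y := B *ᵥ v with hy
  have hyne : y ≠ 0 := by
    intro h
    apply hv
    have hinv := Matrix.nonsing_inv_mul B ((Matrix.isUnit_iff_isUnit_det _).1 hB)
    calc v = (B⁻¹ * B) *ᵥ v := by rw [hinv, Matrix.one_mulVec]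
    _ = B⁻¹ *ᵥ y := by rw [← Matrix.mulVec_mulVec]
    _ = 0 := by rw [h, Matrix.mulVec_zero]
  have hvval : v = (-(τ:ℂ)) • (A *ᵥ y) := by
    have h0 : v + (τ:ℂ) • (A *ᵥ y) = 0 := by
      simpa [Matrix.add_mulVec, Matrix.one_mulVec, Matrix.smul_mulVec, hy,
        Matrix.mulVec_mulVec] using hveq
    have := eq_neg_of_add_eq_zero_left h0
    simp [this, neg_smul]
  have hz := h1.dotProduct_mulVec_pos hyne
  have hw := h2.dotProduct_mulVec_pos hv
  set z := star y ⬝ᵥ ((H * A) *ᵥ y) with hzdef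
  have hz' : 0 < z + star z := by
    have e : star y ⬝ᵥ ((H * A + (H * A)ᴴ) *ᵥ y) = z + star z := by
      rw [Matrix.add_mulVec, dotProduct_add, hzdef, aux_dot]
    rwa [e] at hz
  have hsv : star v = (-(τ:ℂ)) • star (A *ᵥ y) := by
    rw [hvval]; ext i; simp [Complex.ext_iff]
  have e1 : star v ⬝ᵥ ((Hᴴ * B) *ᵥ v) = (-(τ:ℂ)) * star z := by
    rw [show (Hᴴ * B) *ᵥ v = Hᴴ *ᵥ y by rw [← Matrix.mulVec_mulVec], hsv,
      smul_dotProduct, smul_eq_mul, aux_dot, Matrix.mulVec_mulVec, ← hzdef]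
  have e2 : star v ⬝ᵥ ((Hᴴ * B)ᴴ *ᵥ v) = (-(τ:ℂ)) * z := by
    rw [aux_dot, e1, star_mul', star_star]
    simp [mul_comm]
  have hw' : star v ⬝ᵥ ((Hᴴ * B + (Hᴴ * B)ᴴ) *ᵥ v) = (-(τ:ℂ)) * (z + star z) := by
    rw [Matrix.add_mulVec, dotProduct_add, e1, e2]; ring
  rw [hw'] at hw
  have h0 : (0:ℂ) ≤ (τ:ℂ) * (z + star z) := mul_nonneg (by exact_mod_cast hτ) hz'.le
  have hle : (-(τ:ℂ)) * (z + star z) ≤ 0 := by rw [neg_mul]; exact neg_nonpos.2 h0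
  exact absurd hw hle.not_gt
end

section
/- Let A, B ∈ M_n(ℂ) and suppose there exists H ∈ M_n(ℂ) and ε > 0 such that H A + A* H* ⪰ ε A* A and H* B + B* H ⪰ 0. Then det(I + τ A B) ≠ 0 for every real τ ≥ 0. -/
open Matrix ComplexOrder

lemma dot_conjT_aux {n : ℕ} (M : Matrix (Fin n) (Fin n) ℂ) (a b : Fin n → ℂ) :
    star a ⬝ᵥ (Mᴴ *ᵥ b) = star (star b ⬝ᵥ (M *ᵥ a)) := by
  rw [dotProduct_mulVec, ← star_mulVec, star_dotProduct]

theorem stmt4 {n : ℕ} (A B H : Matrix (Fin n) (Fin n) ℂ) (ε : ℝ) (hε : 0 < ε)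
    (h1 : (H * A + Aᴴ * Hᴴ - (ε : ℂ) • (Aᴴ * A)).PosSemidef)
    (h2 : (Hᴴ * B + Bᴴ * H).PosSemidef) :
    ∀ τ : ℝ, 0 ≤ τ → (1 + (τ : ℂ) • (A * B)).det ≠ 0 := by
  intro τ hτ hdet
  rcases eq_or_lt_of_le hτ with h0 | hpos
  · rw [← h0] at hdet; simp at hdet
  obtain ⟨x, hx, hxv⟩ := Matrix.exists_mulVec_eq_zero_iff.mpr hdet
  have hτ0 : (τ : ℂ) ≠ 0 := by exact_mod_cast hpos.ne'
  set t : ℝ := 1 / τ with ht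
  have htpos : 0 < t := by positivity
  -- A *ᵥ (B *ᵥ x) = (-t) • x
  have hAy : A *ᵥ (B *ᵥ x) = ((-t : ℝ) : ℂ) • x := by
    have h0' : x + (τ : ℂ) • (A *ᵥ (B *ᵥ x)) = 0 := by
      have := hxv
      rwa [add_mulVec, one_mulVec, smul_mulVec, ← mulVec_mulVec] at this
    have h2' : (τ : ℂ) • (A *ᵥ (B *ᵥ x)) = -x := by
      linear_combination (norm := module) h0'
    apply smul_right_injective (Fin n → ℂ) hτ0
    show (τ : ℂ) • (A *ᵥ (B *ᵥ x)) = (τ : ℂ) • (((-t : ℝ) : ℂ) • x)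
    rw [h2', smul_smul]
    have : (τ : ℂ) * ((-t : ℝ) : ℂ) = -1 := by
      rw [ht]; push_cast; field_simp
    rw [this]; simp
  set c : ℂ := star (B *ᵥ x) ⬝ᵥ (H *ᵥ x) with hc
  set r : ℂ := star x ⬝ᵥ x with hr
  have hrstar : star r = r := by
    rw [hr]; conv_rhs => rw [star_dotProduct]
  have hr0 : 0 < r.re := by
    have hne : r ≠ 0 := by
      simpa [hr] using (dotProduct_star_self_eq_zero (v := x)).not.mpr hx
    have hnn : 0 ≤ r := by
      rw [hr]
      exact Finset.sum_nonneg fun i _ => by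
        simpa using star_mul_self_nonneg (x i)
    rcases (Complex.nonneg_iff.mp hnn) with ⟨h1', h2'⟩
    rcases lt_or_eq_of_le h1' with h | h
    · exact h
    · exfalso; exact hne (Complex.ext (by simp [← h]) (by simp [← h2']))
  -- h2 gives 0 ≤ star c + c
  have key2 : 0 ≤ star c + c := by
    have h := h2.dotProduct_mulVec_nonneg x
    rwa [add_mulVec, dotProduct_add, ← mulVec_mulVec, ← mulVec_mulVec,
      dot_conjT_aux H x (B *ᵥ x), dot_conjT_aux B x (H *ᵥ x),
      star_dotProduct (H *ᵥ x) (B *ᵥ x), star_star, ← hc] at h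
  -- h1 gives the main inequality
  have key1 : 0 ≤ ((-t : ℝ) : ℂ) * c + ((-t : ℝ) : ℂ) * star c
      - (ε : ℂ) * (((t ^ 2 : ℝ) : ℂ) * r) := by
    have h := h1.dotProduct_mulVec_nonneg (B *ᵥ x)
    rw [sub_mulVec, add_mulVec, dotProduct_sub, dotProduct_add] at h
    have e1 : star (B *ᵥ x) ⬝ᵥ ((H * A) *ᵥ (B *ᵥ x)) = ((-t : ℝ) : ℂ) * c := by
      rw [← mulVec_mulVec, hAy, mulVec_smul, dotProduct_smul, smul_eq_mul, ← hc]
    have e2 : star (B *ᵥ x) ⬝ᵥ ((Aᴴ * Hᴴ) *ᵥ (B *ᵥ x)) = ((-t : ℝ) : ℂ) * star c := by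
      rw [show Aᴴ * Hᴴ = (H * A)ᴴ by rw [conjTranspose_mul], dot_conjT_aux, e1, star_mul']
      simp [mul_comm]
    have e3 : star (B *ᵥ x) ⬝ᵥ (((ε : ℂ) • (Aᴴ * A)) *ᵥ (B *ᵥ x))
        = (ε : ℂ) * (((t ^ 2 : ℝ) : ℂ) * r) := by
      rw [smul_mulVec, dotProduct_smul, smul_eq_mul]
      congr 1
      rw [← mulVec_mulVec, dotProduct_mulVec, ← star_mulVec, hAy, star_smul,
        smul_dotProduct, dotProduct_smul, smul_eq_mul, smul_eq_mul, ← hr]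
      simp only [Complex.star_def, map_neg, Complex.conj_ofReal]
      push_cast
      ring
    rwa [e1, e2, e3] at h
  -- extract real parts
  have hc2 : 0 ≤ c.re := by
    have := (Complex.nonneg_iff.mp key2).1
    simp only [Complex.add_re, Complex.star_def, Complex.conj_re] at this
    linarith
  have hc1 := (Complex.nonneg_iff.mp key1).1
  simp only [Complex.sub_re, Complex.add_re, Complex.re_ofReal_mul,
    Complex.star_def, Complex.conj_re] at hc1
  have hpos1 : 0 < ε * (t ^ 2 * r.re) :=
    mul_pos hε (mul_pos (pow_pos htpos 2) hr0)
  nlinarith [mul_nonneg htpos.le hc2]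
end

section
/- Let A, B ∈ M_n(ℂ) with A invertible, and suppose there exists an invertible H ∈ M_n(ℂ) such that H A is strictly accretive and H* B is accretive. Then A B has no eigenvalue on the strictly negative real axis. -/
open Matrix ComplexOrder

theorem stmt8 {n : ℕ} (A B H : Matrix (Fin n) (Fin n) ℂ) (hA : IsUnit A) (hH : IsUnit H)
    (h1 : (H * A + (H * A)ᴴ).PosDef) (h2 : (Hᴴ * B + (Hᴴ * B)ᴴ).PosSemidef) :
    ∀ r : ℝ, r < 0 → (r : ℂ) ∉ spectrum ℂ (A * B) := by
  intro r hr hmem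
  rw [spectrum.mem_iff] at hmem
  have hdet : ((algebraMap ℂ (Matrix (Fin n) (Fin n) ℂ) r) - A * B).det = 0 := by
    by_contra hd
    exact hmem ((Matrix.isUnit_iff_isUnit_det _).2 (isUnit_iff_ne_zero.2 hd))
  obtain ⟨v, hv, hveq⟩ := (Matrix.exists_mulVec_eq_zero_iff).2 hdet
  have halg : (algebraMap ℂ (Matrix (Fin n) (Fin n) ℂ) (r : ℂ)) = (r : ℂ) • 1 :=
    Algebra.algebraMap_eq_smul_one _
  have hABv : (A * B) *ᵥ v = (r : ℂ) • v := by
    have h := hveq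
    rw [Matrix.sub_mulVec, sub_eq_zero] at h
    rw [← h, halg, Matrix.smul_mulVec, Matrix.one_mulVec]
  set w := B *ᵥ v with hw
  have hAw : A *ᵥ w = (r : ℂ) • v := by
    rw [hw, Matrix.mulVec_mulVec, hABv]
  have hr0 : (r : ℂ) ≠ 0 := by
    simpa using (ne_of_lt hr)
  have hwne : w ≠ 0 := by
    intro h0
    apply hv
    have : A *ᵥ w = 0 := by rw [h0, Matrix.mulVec_zero]
    rw [hAw] at this
    exact (smul_eq_zero.1 this).resolve_left hr0
  have adj : ∀ (M : Matrix (Fin n) (Fin n) ℂ) (x y : Fin n → ℂ),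
      star x ⬝ᵥ (Mᴴ *ᵥ y) = star (M *ᵥ x) ⬝ᵥ y := by
    intro M x y
    rw [star_mulVec, dotProduct_mulVec, vecMul_conjTranspose]
  have hstar : star ((r : ℂ)) = (r : ℂ) := by
    rw [Complex.star_def, Complex.conj_ofReal]
  have hHBv : (Hᴴ * B) *ᵥ v = Hᴴ *ᵥ w := by
    rw [← Matrix.mulVec_mulVec, hw]
  have e1 : (r : ℂ) * (star v ⬝ᵥ ((Hᴴ * B) *ᵥ v)) = star w ⬝ᵥ ((H * A)ᴴ *ᵥ w) := by
    rw [hHBv, adj H v w, adj (H * A) w w]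
    have : (r : ℂ) * (star (H *ᵥ v) ⬝ᵥ w) = star (H *ᵥ ((r : ℂ) • v)) ⬝ᵥ w := by
      rw [Matrix.mulVec_smul, star_smul, hstar, smul_dotProduct, smul_eq_mul]
    rw [this, ← hAw, Matrix.mulVec_mulVec]
  have e2 : (r : ℂ) * (star v ⬝ᵥ ((Hᴴ * B)ᴴ *ᵥ v)) = star w ⬝ᵥ ((H * A) *ᵥ w) := by
    rw [adj (Hᴴ * B) v v, hHBv]
    have h3 : (r : ℂ) * (star (Hᴴ *ᵥ w) ⬝ᵥ v) = star (Hᴴ *ᵥ w) ⬝ᵥ ((r : ℂ) • v) := by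
      rw [dotProduct_smul, smul_eq_mul]
    rw [h3, ← hAw]
    have h4 := adj Hᴴ w (A *ᵥ w)
    rw [conjTranspose_conjTranspose] at h4
    rw [← h4, Matrix.mulVec_mulVec]
  have hc : 0 < star w ⬝ᵥ ((H * A + (H * A)ᴴ) *ᵥ w) := h1.dotProduct_mulVec_pos hwne
  have hs : 0 ≤ star v ⬝ᵥ ((Hᴴ * B + (Hᴴ * B)ᴴ) *ᵥ v) := h2.dotProduct_mulVec_nonneg v
  have key : (r : ℂ) * (star v ⬝ᵥ ((Hᴴ * B + (Hᴴ * B)ᴴ) *ᵥ v))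
      = star w ⬝ᵥ ((H * A + (H * A)ᴴ) *ᵥ w) := by
    rw [Matrix.add_mulVec, dotProduct_add, Matrix.add_mulVec, dotProduct_add, mul_add,
      e1, e2, add_comm]
  have hrneg : (r : ℂ) ≤ 0 := by exact_mod_cast hr.le
  have hrle : (r : ℂ) * (star v ⬝ᵥ ((Hᴴ * B + (Hᴴ * B)ᴴ) *ᵥ v)) ≤ 0 :=
    mul_nonpos_of_nonpos_of_nonneg hrneg hs
  rw [key] at hrle
  exact absurd hrle hc.not_ge
end

section
/- Given A ∈ M_{m,n}(ℂ) and B ∈ M_{n,m}(ℂ), if there exist Hermitian matrices M ∈ M_m(ℂ) and N ∈ M_n(ℂ) such that A* M A ≺ N and B* N B ≺ M, then A B has no eigenvalue on the unit circle. -/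
open Matrix ComplexOrder

theorem stmt10 {m n : ℕ} (A : Matrix (Fin m) (Fin n) ℂ) (B : Matrix (Fin n) (Fin m) ℂ)
    (M : Matrix (Fin m) (Fin m) ℂ) (N : Matrix (Fin n) (Fin n) ℂ)
    (hM : M.IsHermitian) (hN : N.IsHermitian)
    (h1 : (N - Aᴴ * M * A).PosDef) (h2 : (M - Bᴴ * N * B).PosDef) :
    ∀ z ∈ spectrum ℂ (A * B), ‖z‖ ≠ 1 := by
  intro z hz habs
  -- obtain an eigenvector
  rw [spectrum.mem_iff] at hz
  rw [Matrix.isUnit_iff_isUnit_det, isUnit_iff_ne_zero, not_not] at hz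
  obtain ⟨v, hv0, hv⟩ := (Matrix.exists_mulVec_eq_zero_iff).mpr hz
  have heig : (A * B) *ᵥ v = z • v := by
    have := hv
    rw [sub_mulVec, sub_eq_zero] at this
    rw [← this, Algebra.algebraMap_eq_smul_one, Matrix.smul_mulVec, Matrix.one_mulVec]
  -- the Stein matrix is positive definite
  have key : (M - (A * B)ᴴ * M * (A * B)).PosDef := by
    have hcong : (Bᴴ * (N - Aᴴ * M * A) * B).PosSemidef :=
      h1.posSemidef.conjTranspose_mul_mul_same B
    have : M - (A * B)ᴴ * M * (A * B) = (M - Bᴴ * N * B) + Bᴴ * (N - Aᴴ * M * A) * B := by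
      simp only [Matrix.conjTranspose_mul, Matrix.mul_sub, Matrix.sub_mul, Matrix.mul_assoc]
      abel
    rw [this]
    exact h2.add_posSemidef hcong
  -- evaluate the quadratic form at v
  have hpos := key.dotProduct_mulVec_pos hv0
  have hform : star v ⬝ᵥ ((M - (A * B)ᴴ * M * (A * B)) *ᵥ v) = 0 := by
    rw [sub_mulVec, dotProduct_sub]
    have : ((A * B)ᴴ * M * (A * B)) *ᵥ v = (A * B)ᴴ *ᵥ (M *ᵥ ((A * B) *ᵥ v)) := by
      simp [Matrix.mulVec_mulVec, Matrix.mul_assoc]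
    rw [this, heig]
    rw [show star v ⬝ᵥ ((A * B)ᴴ *ᵥ (M *ᵥ z • v)) = star ((A * B) *ᵥ v) ⬝ᵥ (M *ᵥ z • v) by
      rw [star_mulVec, dotProduct_mulVec]]
    rw [heig, mulVec_smul, star_smul, smul_dotProduct, dotProduct_smul]
    have hzz : star z * z = 1 := by
      have h0 := Complex.sq_norm z
      rw [habs] at h0
      have : Complex.normSq z = 1 := by simpa using h0.symm
      rw [Complex.star_def, ← Complex.normSq_eq_conj_mul_self]
      exact_mod_cast congrArg Complex.ofReal this
    simp only [smul_eq_mul]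
    linear_combination (-(star v ⬝ᵥ (M *ᵥ v))) * hzz
  rw [hform] at hpos
  exact lt_irrefl 0 hpos
end

section
/- Given A, B ∈ M_n(ℂ), if det(I + U A V B) ≠ 0 for all unitary U, V ∈ M_n(ℂ), then either σ₁(A) σ₁(B) < 1 or σ_min(A) σ_min(B) > 1. -/
open Matrix ComplexOrder

/-- The largest singular value of a complex matrix: the square root of the
largest eigenvalue of `Aᴴ * A`. -/
noncomputable def maxSV {m n : ℕ} (A : Matrix (Fin m) (Fin n) ℂ) : ℝ :=
  Real.sqrt (⨆ i, (Matrix.posSemidef_conjTranspose_mul_self A).1.eigenvalues i)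

/-- The smallest singular value of a complex matrix: the square root of the
smallest eigenvalue of `Aᴴ * A`. -/
noncomputable def minSV {m n : ℕ} (A : Matrix (Fin m) (Fin n) ℂ) : ℝ :=
  Real.sqrt (⨅ i, (Matrix.posSemidef_conjTranspose_mul_self A).1.eigenvalues i)

/-- A unitary matrix mapping one orthonormal family to another. -/
lemma exists_unitary_map {n : ℕ} {ι : Type} [Fintype ι] [DecidableEq ι] (e : ι ↪ Fin n)
    (y v : ι → EuclideanSpace ℂ (Fin n))
    (hy : Orthonormal ℂ y) (hv : Orthonormal ℂ v) :
    ∃ V ∈ Matrix.unitaryGroup (Fin n) ℂ, ∀ j, V *ᵥ (y j : Fin n → ℂ) = (v j : Fin n → ℂ) := by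
  have hcard : Module.finrank ℂ (EuclideanSpace ℂ (Fin n)) = Fintype.card (Fin n) := by
    simp [finrank_euclideanSpace]
  -- build orthonormal bases extending e-indexed families
  have hext : ∀ (w : ι → EuclideanSpace ℂ (Fin n)), Orthonormal ℂ w →
      ∃ b : OrthonormalBasis (Fin n) ℂ (EuclideanSpace ℂ (Fin n)), ∀ j, b (e j) = w j := by
    intro w hw
    have hinj := e.injective
    set W : Fin n → EuclideanSpace ℂ (Fin n) := Function.extend e w 0 with hW
    have hWe : ∀ j, W (e j) = w j := fun j => hinj.extend_apply w 0 j
    have hres : Orthonormal ℂ ((Set.range e).restrict W) := by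
      have : (Set.range e).restrict W = w ∘ (fun i : Set.range e =>
          (Equiv.ofInjective e hinj).symm i) := by
        funext i
        simp only [Set.restrict_apply, Function.comp_apply]
        have h1 : (i : Fin n) = e ((Equiv.ofInjective e hinj).symm i) :=
          (congrArg Subtype.val (((Equiv.ofInjective e hinj).apply_symm_apply i))).symm
        change W (i : Fin n) = _
        rw [h1, hWe]
      rw [this]
      exact hw.comp _ (Equiv.injective _)
    obtain ⟨b, hb⟩ := hres.exists_orthonormalBasis_extension_of_card_eq hcard
    exact ⟨b, fun j => by rw [hb (e j) (Set.mem_range_self j), hWe]⟩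
  obtain ⟨bY, hbY⟩ := hext y hy
  obtain ⟨bZ, hbZ⟩ := hext v hv
  set P : Matrix (Fin n) (Fin n) ℂ :=
    (EuclideanSpace.basisFun (Fin n) ℂ).toBasis.toMatrix bZ.toBasis with hP
  set Q : Matrix (Fin n) (Fin n) ℂ :=
    (EuclideanSpace.basisFun (Fin n) ℂ).toBasis.toMatrix bY.toBasis with hQ
  have hPu : P ∈ Matrix.unitaryGroup (Fin n) ℂ :=
    (EuclideanSpace.basisFun (Fin n) ℂ).toMatrix_orthonormalBasis_mem_unitary bZ
  have hQu : Q ∈ Matrix.unitaryGroup (Fin n) ℂ :=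
    (EuclideanSpace.basisFun (Fin n) ℂ).toMatrix_orthonormalBasis_mem_unitary bY
  refine ⟨P * Qᴴ, ?_, ?_⟩
  · exact mul_mem hPu (Unitary.star_mem hQu)
  · intro j
    have hQcol : ∀ i, Q *ᵥ Pi.single i 1 = (bY i : Fin n → ℂ) := by
      intro i
      have : ∀ a b, Q a b = bY b a := fun a b => rfl
      funext a
      simp [Matrix.mulVec_single, this]
    have hPcol : ∀ i, P *ᵥ Pi.single i 1 = (bZ i : Fin n → ℂ) := by
      intro i
      have : ∀ a b, P a b = bZ b a := fun a b => rfl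
      funext a
      simp [Matrix.mulVec_single, this]
    have hQstar : Qᴴ *ᵥ (bY (e j) : Fin n → ℂ) = Pi.single (e j) 1 := by
      rw [← hQcol (e j), Matrix.mulVec_mulVec]
      have : Qᴴ * Q = 1 := Matrix.mem_unitaryGroup_iff'.mp hQu
      rw [this, Matrix.one_mulVec]
    rw [← hbY j, ← hbZ j, ← Matrix.mulVec_mulVec, hQstar, hPcol]

lemma exists_unitary_map' {n : ℕ} {ι : Type} [Fintype ι] [DecidableEq ι] (e : ι ↪ Fin n)
    (y v : ι → (Fin n → ℂ))
    (hy : ∀ k l, star (y k) ⬝ᵥ y l = if k = l then 1 else 0)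
    (hv : ∀ k l, star (v k) ⬝ᵥ v l = if k = l then 1 else 0) :
    ∃ V ∈ Matrix.unitaryGroup (Fin n) ℂ, ∀ j, V *ᵥ y j = v j := by
  have mk : ∀ (w : ι → (Fin n → ℂ)), (∀ k l, star (w k) ⬝ᵥ w l = if k = l then 1 else 0) →
      Orthonormal ℂ (fun k => (WithLp.equiv 2 (Fin n → ℂ)).symm (w k)) := by
    intro w hw
    rw [orthonormal_iff_ite]
    intro i j
    rw [EuclideanSpace.inner_eq_star_dotProduct, dotProduct_comm]
    simpa using hw i j
  obtain ⟨V, hVu, hV⟩ := exists_unitary_map e _ _ (mk y hy) (mk v hv)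
  exact ⟨V, hVu, fun j => hV j⟩

lemma exists_unitary_scale {n : ℕ} (hn : 2 ≤ n) (b : Fin 2 → ℝ)
    (q v : Fin 2 → (Fin n → ℂ))
    (hq : ∀ k l, star (q k) ⬝ᵥ q l = if k = l then (((b k)^2 : ℝ) : ℂ) else 0)
    (hv : ∀ k l, star (v k) ⬝ᵥ v l = if k = l then 1 else 0) :
    ∃ V ∈ Matrix.unitaryGroup (Fin n) ℂ, ∀ k, V *ᵥ q k = ((b k : ℂ)) • v k := by
  classical
  have hq0 : ∀ k, b k = 0 → q k = 0 := by
    intro k hk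
    refine dotProduct_star_self_eq_zero.mp ?_
    rw [hq k k, if_pos rfl, hk]
    norm_num
  set ι := {k : Fin 2 // b k ≠ 0} with hι
  have einj : Function.Injective (fun k : ι => Fin.castLE hn k.1) := by
    intro a b h
    exact Subtype.ext (Fin.castLE_injective hn h)
  set y : ι → (Fin n → ℂ) := fun k => ((b k.1 : ℂ))⁻¹ • q k.1 with hy0
  have hy : ∀ k l : ι, star (y k) ⬝ᵥ y l = if k = l then 1 else 0 := by
    intro k l
    simp only [hy0, star_smul, smul_dotProduct, dotProduct_smul, hq,
      smul_eq_mul, star_inv₀, RCLike.star_def, Complex.conj_ofReal]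
    by_cases h : k = l
    · subst h
      have hbk : ((b k.1 : ℂ)) ≠ 0 := Complex.ofReal_ne_zero.mpr k.2
      rw [if_pos rfl, if_pos rfl]
      push_cast
      field_simp
    · have h2 : (k.1 = l.1) = False := by
        simp only [eq_iff_iff, iff_false]
        exact fun hh => h (Subtype.ext hh)
      simp [h, h2]
  have hv' : ∀ k l : ι, star (v k.1) ⬝ᵥ v l.1 = if k = l then 1 else 0 := by
    intro k l
    rw [hv k.1 l.1]
    congr 1
    exact propext Subtype.val_inj
  obtain ⟨V, hVu, hV⟩ := exists_unitary_map' ⟨_, einj⟩ y (fun k => v k.1) hy hv'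
  refine ⟨V, hVu, fun k => ?_⟩
  by_cases hk : b k = 0
  · rw [hq0 k hk, Matrix.mulVec_zero, hk]
    simp
  · have hbk : ((b k : ℂ)) ≠ 0 := Complex.ofReal_ne_zero.mpr hk
    have hqk : q k = (b k : ℂ) • y ⟨k, hk⟩ := by
      simp only [hy0, smul_smul, mul_inv_cancel₀ hbk, one_smul]
    rw [hqk, Matrix.mulVec_smul, hV ⟨k, hk⟩]

lemma two_by_two_core (d0 d1 : ℝ) (h0 : 1 ≤ d0) (h1 : 0 ≤ d1) (h1' : d1 ≤ 1) :
    ∃ c s x0 x1 : ℝ, c^2 + s^2 = 1 ∧ ¬(x0 = 0 ∧ x1 = 0) ∧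
      c * d0 * x0 - s * d1 * x1 = -x0 ∧ s * d0 * x0 + c * d1 * x1 = -x1 := by
  have hd : 0 < d0 + d1 := by linarith
  set c : ℝ := -(1 + d0 * d1) / (d0 + d1) with hc
  have key : 1 + (d0 + d1) * c + d0 * d1 = 0 := by
    rw [hc]; field_simp; ring
  have hc2 : c ^ 2 ≤ 1 := by
    rw [hc, div_pow, div_le_one (by positivity)]
    nlinarith [mul_nonneg (mul_nonneg (sub_nonneg.mpr h0) (sub_nonneg.mpr h1'))
      (by positivity : (0:ℝ) ≤ (1 + d0) * (1 + d1))]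
  set s : ℝ := Real.sqrt (1 - c ^ 2) with hs
  have hs2 : s ^ 2 = 1 - c ^ 2 := Real.sq_sqrt (by linarith)
  have hcs : c ^ 2 + s ^ 2 = 1 := by rw [hs2]; ring
  by_cases hdeg : d0 * s = 0 ∧ 1 + d1 * c = 0
  · refine ⟨c, s, 0, 1, hcs, by simp, ?_, ?_⟩
    · have hs0 : s = 0 := by
        rcases mul_eq_zero.mp hdeg.1 with h | h
        · linarith
        · exact h
      rw [hs0]; ring
    · have := hdeg.2; nlinarith
  · refine ⟨c, s, 1 + c * d1, -(s * d0), hcs, ?_, ?_, ?_⟩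
    · rintro ⟨hx0, hx1⟩
      exact hdeg ⟨by linarith, by linarith⟩
    · linear_combination key + d0 * d1 * hcs
    · ring

lemma gram_mulVec {n : ℕ} (B : Matrix (Fin n) (Fin n) ℂ) (x y : Fin n → ℂ) :
    star (B *ᵥ x) ⬝ᵥ (B *ᵥ y) = star x ⬝ᵥ ((Bᴴ * B) *ᵥ y) := by
  rw [Matrix.star_mulVec, Matrix.dotProduct_mulVec, Matrix.vecMul_vecMul,
    ← Matrix.dotProduct_mulVec]

lemma pair_dot {n : ℕ} (b : OrthonormalBasis (Fin n) ℂ (EuclideanSpace ℂ (Fin n)))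
    {i j : Fin n} (hij : i ≠ j) (k l : Fin 2) :
    star ((![⇑(b i), ⇑(b j)] : Fin 2 → (Fin n → ℂ)) k) ⬝ᵥ
      ((![⇑(b i), ⇑(b j)] : Fin 2 → (Fin n → ℂ)) l) = if k = l then 1 else 0 := by
  have key : ∀ p q : Fin n, (star (⇑(b p) : Fin n → ℂ)) ⬝ᵥ (⇑(b q) : Fin n → ℂ) =
      if p = q then 1 else 0 := by
    intro p q
    have h1 := orthonormal_iff_ite.mp b.orthonormal p q
    rw [EuclideanSpace.inner_eq_star_dotProduct, dotProduct_comm] at h1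
    exact h1
  fin_cases k <;> fin_cases l
  · simpa using key i i
  · simpa [hij] using key i j
  · simpa [hij.symm] using key j i
  · simpa using key j j

lemma exists_max_min {m : ℕ} (f : Fin (m + 2) → ℝ) :
    ∃ i j : Fin (m + 2), i ≠ j ∧ (∀ k, f k ≤ f i) ∧ (∀ k, f j ≤ f k) := by
  obtain ⟨i, hi⟩ := Finite.exists_max f
  have hne : (Finset.univ.erase i).Nonempty := by
    apply Finset.card_pos.mp
    rw [Finset.card_erase_of_mem (Finset.mem_univ i), Finset.card_univ, Fintype.card_fin]
    omega
  obtain ⟨j, hjmem, hj⟩ := Finset.exists_min_image _ f hne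
  refine ⟨i, j, (Finset.ne_of_mem_erase hjmem).symm, hi, fun k => ?_⟩
  by_cases hk : k = i
  · subst hk; exact hi j
  · exact hj k (Finset.mem_erase.mpr ⟨hk, Finset.mem_univ k⟩)

lemma ciSup_eq_max {ι : Type*} [Nonempty ι] [Finite ι] (f : ι → ℝ) (i : ι)
    (hi : ∀ j, f j ≤ f i) : (⨆ j, f j) = f i :=
  le_antisymm (ciSup_le hi) (le_ciSup (Set.Finite.bddAbove (Set.finite_range f)) i)

lemma ciInf_eq_min {ι : Type*} [Nonempty ι] [Finite ι] (f : ι → ℝ) (i : ι)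
    (hi : ∀ j, f i ≤ f j) : (⨅ j, f j) = f i :=
  le_antisymm (ciInf_le (Set.Finite.bddBelow (Set.finite_range f)) i) (le_ciInf hi)

lemma core_case {m : ℕ} (A B : Matrix (Fin (m + 2)) (Fin (m + 2)) ℂ)
    (h : ∀ U ∈ Matrix.unitaryGroup (Fin (m + 2)) ℂ, ∀ V ∈ Matrix.unitaryGroup (Fin (m + 2)) ℂ,
      (1 + U * A * V * B).det ≠ 0)
    (h1 : 1 ≤ maxSV A * maxSV B) (h2 : minSV A * minSV B ≤ 1) : False := by
  have hn : 2 ≤ m + 2 := by omega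
  unfold maxSV at h1
  unfold minSV at h2
  set μA := (Matrix.posSemidef_conjTranspose_mul_self A).1.eigenvalues with hμA
  set μB := (Matrix.posSemidef_conjTranspose_mul_self B).1.eigenvalues with hμB
  obtain ⟨iA, jA, hijA, hiA, hjA⟩ := exists_max_min μA
  obtain ⟨iB, jB, hijB, hiB, hjB⟩ := exists_max_min μB
  rw [ciSup_eq_max μA iA hiA, ciSup_eq_max μB iB hiB] at h1
  rw [ciInf_eq_min μA jA hjA, ciInf_eq_min μB jB hjB] at h2
  have hA0 : ∀ i, 0 ≤ μA i := fun i =>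
    (Matrix.posSemidef_conjTranspose_mul_self A).eigenvalues_nonneg i
  have hB0 : ∀ i, 0 ≤ μB i := fun i =>
    (Matrix.posSemidef_conjTranspose_mul_self B).eigenvalues_nonneg i
  set a0 := Real.sqrt (μA iA) with ha0
  set a1 := Real.sqrt (μA jA) with ha1
  set b0 := Real.sqrt (μB iB) with hb0
  set b1 := Real.sqrt (μB jB) with hb1
  obtain ⟨c, s, x0, x1, hcs, hx01, he1, he2⟩ :=
    two_by_two_core (a0 * b0) (a1 * b1) h1 (by positivity) h2
  have hcsC : (c : ℂ) ^ 2 + (s : ℂ) ^ 2 = 1 := by exact_mod_cast hcs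
  -- eigenvector pairs
  set bA := (Matrix.posSemidef_conjTranspose_mul_self A).1.eigenvectorBasis with hbA
  set bB := (Matrix.posSemidef_conjTranspose_mul_self B).1.eigenvectorBasis with hbB
  set wA : Fin 2 → (Fin (m + 2) → ℂ) := ![⇑(bA iA), ⇑(bA jA)] with hwAdef
  set wB : Fin 2 → (Fin (m + 2) → ℂ) := ![⇑(bB iB), ⇑(bB jB)] with hwBdef
  have hwA : ∀ k l, star (wA k) ⬝ᵥ wA l = if k = l then 1 else 0 := pair_dot bA hijA
  have hwB : ∀ k l, star (wB k) ⬝ᵥ wB l = if k = l then 1 else 0 := pair_dot bB hijB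
  set q : Fin 2 → (Fin (m + 2) → ℂ) := fun k => B *ᵥ wB k with hqdef
  set p : Fin 2 → (Fin (m + 2) → ℂ) := fun k => A *ᵥ wA k with hpdef
  set av : Fin 2 → ℝ := ![a0, a1] with havdef
  set bv : Fin 2 → ℝ := ![b0, b1] with hbvdef
  -- eigen equations
  have heigA : ∀ l : Fin 2, (Aᴴ * A) *ᵥ wA l = (μA (![iA, jA] l)) • wA l := by
    intro l
    fin_cases l <;>
      simpa [hwAdef, hμA] using
        (Matrix.posSemidef_conjTranspose_mul_self A).1.mulVec_eigenvectorBasis _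
  have heigB : ∀ l : Fin 2, (Bᴴ * B) *ᵥ wB l = (μB (![iB, jB] l)) • wB l := by
    intro l
    fin_cases l <;>
      simpa [hwBdef, hμB] using
        (Matrix.posSemidef_conjTranspose_mul_self B).1.mulVec_eigenvectorBasis _
  -- Gram facts
  have hgramA : ∀ k l, star (p k) ⬝ᵥ p l = if k = l then (((av k) ^ 2 : ℝ) : ℂ) else 0 := by
    intro k l
    rw [hpdef]
    simp only
    rw [gram_mulVec, heigA l, dotProduct_smul, hwA k l]
    by_cases hkl : k = l
    · subst hkl
      rw [if_pos rfl, if_pos rfl]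
      fin_cases k <;>
        simp [havdef, Complex.real_smul, Real.sq_sqrt (hA0 _), ha0, ha1]
    · simp [hkl]
  have hgramB : ∀ k l, star (q k) ⬝ᵥ q l = if k = l then (((bv k) ^ 2 : ℝ) : ℂ) else 0 := by
    intro k l
    rw [hqdef]
    simp only
    rw [gram_mulVec, heigB l, dotProduct_smul, hwB k l]
    by_cases hkl : k = l
    · subst hkl
      rw [if_pos rfl, if_pos rfl]
      fin_cases k <;>
        simp [hbvdef, Complex.real_smul, Real.sq_sqrt (hB0 _), hb0, hb1]
    · simp [hkl]
  -- rotated targets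
  set r : Fin 2 → (Fin (m + 2) → ℂ) :=
    ![(c : ℂ) • wB 0 + (s : ℂ) • wB 1, (-(s : ℂ)) • wB 0 + (c : ℂ) • wB 1] with hrdef
  have w00 : star (wB 0) ⬝ᵥ wB 0 = 1 := by simpa using hwB 0 0
  have w01 : star (wB 0) ⬝ᵥ wB 1 = 0 := by simpa using hwB 0 1
  have w10 : star (wB 1) ⬝ᵥ wB 0 = 0 := by simpa using hwB 1 0
  have w11 : star (wB 1) ⬝ᵥ wB 1 = 1 := by simpa using hwB 1 1
  have hr : ∀ k l, star (r k) ⬝ᵥ r l = if k = l then 1 else 0 := by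
    intro k l
    fin_cases k <;> fin_cases l <;>
      (simp only [hrdef, Matrix.cons_val_zero, Matrix.cons_val_one, Matrix.head_cons,
        star_add, star_smul, add_dotProduct, dotProduct_add,
        smul_dotProduct, dotProduct_smul, RCLike.star_def, map_neg,
        Complex.conj_ofReal, smul_eq_mul, Fin.isValue]
       norm_num
       ring_nf
       simp only [w00, w01, w10, w11, mul_one, mul_zero, add_zero, zero_add, neg_zero,
         sub_zero]
       first
       | linear_combination hcsC
       | ring)
  obtain ⟨V, hVu, hV⟩ := exists_unitary_scale hn bv q wA hgramB hwA
  obtain ⟨U, hUu, hU⟩ := exists_unitary_scale hn av p r hgramA hr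
  have hV0 : V *ᵥ q 0 = (b0 : ℂ) • wA 0 := by simpa [hbvdef] using hV 0
  have hV1 : V *ᵥ q 1 = (b1 : ℂ) • wA 1 := by simpa [hbvdef] using hV 1
  have hU0 : U *ᵥ p 0 = (a0 : ℂ) • r 0 := by simpa [havdef] using hU 0
  have hU1 : U *ᵥ p 1 = (a1 : ℂ) • r 1 := by simpa [havdef] using hU 1
  set x : Fin (m + 2) → ℂ := (x0 : ℂ) • wB 0 + (x1 : ℂ) • wB 1 with hxdef
  have hxne : x ≠ 0 := by
    intro h0
    have e0 : star (wB 0) ⬝ᵥ x = (x0 : ℂ) := by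
      rw [hxdef, dotProduct_add, dotProduct_smul, dotProduct_smul,
        w00, w01]
      simp
    have e1 : star (wB 1) ⬝ᵥ x = (x1 : ℂ) := by
      rw [hxdef, dotProduct_add, dotProduct_smul, dotProduct_smul,
        w10, w11]
      simp
    rw [h0, dotProduct_zero] at e0 e1
    exact hx01 ⟨by exact_mod_cast e0.symm, by exact_mod_cast e1.symm⟩
  have hE1 : (x0:ℂ) * (b0:ℂ) * ((a0:ℂ) * (c:ℂ)) + (x1:ℂ) * (b1:ℂ) * ((a1:ℂ) * (-(s:ℂ)))
      = -(x0:ℂ) := by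
    have hre : x0 * b0 * (a0 * c) + x1 * b1 * (a1 * (-s)) = -x0 := by linear_combination he1
    exact_mod_cast hre
  have hE2 : (x0:ℂ) * (b0:ℂ) * ((a0:ℂ) * (s:ℂ)) + (x1:ℂ) * (b1:ℂ) * ((a1:ℂ) * (c:ℂ))
      = -(x1:ℂ) := by
    have hre : x0 * b0 * (a0 * s) + x1 * b1 * (a1 * c) = -x1 := by linear_combination he2
    exact_mod_cast hre
  have hp0 : A *ᵥ wA 0 = p 0 := rfl
  have hp1 : A *ᵥ wA 1 = p 1 := rfl
  have hr0 : r 0 = (c : ℂ) • wB 0 + (s : ℂ) • wB 1 := by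
    rw [hrdef]; simp
  have hr1 : r 1 = (-(s : ℂ)) • wB 0 + (c : ℂ) • wB 1 := by
    rw [hrdef]; simp
  have hcalc : (U * A * V * B) *ᵥ x = -x := by
    have step : (U * A * V * B) *ᵥ x = U *ᵥ (A *ᵥ (V *ᵥ (B *ᵥ x))) := by
      rw [← Matrix.mulVec_mulVec, ← Matrix.mulVec_mulVec, ← Matrix.mulVec_mulVec]
    rw [step]
    have s1 : B *ᵥ x = (x0:ℂ) • q 0 + (x1:ℂ) • q 1 := by
      rw [hxdef, Matrix.mulVec_add, Matrix.mulVec_smul, Matrix.mulVec_smul]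
    rw [s1, Matrix.mulVec_add, Matrix.mulVec_smul, Matrix.mulVec_smul, hV0, hV1,
      Matrix.mulVec_add, Matrix.mulVec_smul, Matrix.mulVec_smul, Matrix.mulVec_smul,
      Matrix.mulVec_smul, hp0, hp1,
      Matrix.mulVec_add, Matrix.mulVec_smul, Matrix.mulVec_smul, Matrix.mulVec_smul,
      Matrix.mulVec_smul, hU0, hU1, hr0, hr1, hxdef]
    match_scalars
    · linear_combination hE1
    · linear_combination hE2
  have hzero : (1 + U * A * V * B) *ᵥ x = 0 := by
    rw [Matrix.add_mulVec, Matrix.one_mulVec, hcalc]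
    simp
  exact hxne (Matrix.eq_zero_of_mulVec_eq_zero (h U hUu V hVu) hzero)

lemma one_case (A B : Matrix (Fin 1) (Fin 1) ℂ)
    (h : ∀ U ∈ Matrix.unitaryGroup (Fin 1) ℂ, ∀ V ∈ Matrix.unitaryGroup (Fin 1) ℂ,
      (1 + U * A * V * B).det ≠ 0)
    (h1 : 1 ≤ maxSV A * maxSV B) (h2 : minSV A * minSV B ≤ 1) : False := by
  unfold maxSV at h1
  unfold minSV at h2
  rw [ciSup_unique, ciSup_unique] at h1
  rw [ciInf_unique, ciInf_unique] at h2
  have hA' : (Matrix.posSemidef_conjTranspose_mul_self A).1.eigenvalues default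
      = ‖A 0 0‖ ^ 2 := by
    have hdet := (Matrix.posSemidef_conjTranspose_mul_self A).1.det_eq_prod_eigenvalues
    rw [Matrix.det_fin_one, Fin.prod_univ_one] at hdet
    have h4 : (Aᴴ * A) 0 0 = (starRingEnd ℂ) (A 0 0) * A 0 0 := by
      rw [Matrix.mul_apply, Fin.sum_univ_one, Matrix.conjTranspose_apply]; rfl
    rw [h4, Complex.conj_mul'] at hdet
    rw [show (default : Fin 1) = 0 from rfl]
    have h5 := hdet.symm
    rw [← Complex.ofReal_pow] at h5
    exact RCLike.ofReal_inj.mp h5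
  have hB' : (Matrix.posSemidef_conjTranspose_mul_self B).1.eigenvalues default
      = ‖B 0 0‖ ^ 2 := by
    have hdet := (Matrix.posSemidef_conjTranspose_mul_self B).1.det_eq_prod_eigenvalues
    rw [Matrix.det_fin_one, Fin.prod_univ_one] at hdet
    have h4 : (Bᴴ * B) 0 0 = (starRingEnd ℂ) (B 0 0) * B 0 0 := by
      rw [Matrix.mul_apply, Fin.sum_univ_one, Matrix.conjTranspose_apply]; rfl
    rw [h4, Complex.conj_mul'] at hdet
    rw [show (default : Fin 1) = 0 from rfl]
    have h5 := hdet.symm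
    rw [← Complex.ofReal_pow] at h5
    exact RCLike.ofReal_inj.mp h5
  rw [hA', hB', Real.sqrt_sq (norm_nonneg _), Real.sqrt_sq (norm_nonneg _)] at h1 h2
  set z : ℂ := A 0 0 * B 0 0 with hzdef
  have hz : ‖z‖ = 1 := by
    rw [hzdef, norm_mul]
    linarith
  have hzz : z * (starRingEnd ℂ) z = 1 := by
    rw [Complex.mul_conj]
    norm_cast
    rw [Complex.normSq_eq_norm_sq, hz]
    norm_num
  set U : Matrix (Fin 1) (Fin 1) ℂ := Matrix.of fun _ _ => -(starRingEnd ℂ) z with hUdef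
  have hUu : U ∈ Matrix.unitaryGroup (Fin 1) ℂ := by
    rw [Matrix.mem_unitaryGroup_iff']
    ext i j
    have hi : i = 0 := Subsingleton.elim i 0
    have hj : j = 0 := Subsingleton.elim j 0
    subst hi; subst hj
    simp only [Matrix.mul_apply, Fin.sum_univ_one, Matrix.conjTranspose_apply, hUdef,
      Matrix.star_apply, Matrix.of_apply, Matrix.one_apply_eq, star_neg, RCLike.star_def,
      Complex.conj_conj]
    rw [neg_mul_neg]
    exact hzz
  have happly := h U hUu 1 (one_mem _)
  apply happly
  rw [Matrix.det_fin_one]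
  have hent : (1 + U * A * 1 * B : Matrix (Fin 1) (Fin 1) ℂ) 0 0 = 1 + (-(starRingEnd ℂ) z) * A 0 0 * B 0 0 := by
    simp [hUdef, Matrix.add_apply, Matrix.mul_apply, Fin.sum_univ_one]
  rw [hent]
  have h6 : (starRingEnd ℂ) z * z = 1 := by rw [mul_comm]; exact hzz
  calc 1 + -(starRingEnd ℂ) z * A 0 0 * B 0 0 = 1 - (starRingEnd ℂ) z * z := by
        rw [hzdef]; ring
    _ = 0 := by rw [h6]; ring

theorem stmt16 {n : ℕ} (A B : Matrix (Fin n) (Fin n) ℂ)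
    (h : ∀ U ∈ Matrix.unitaryGroup (Fin n) ℂ, ∀ V ∈ Matrix.unitaryGroup (Fin n) ℂ,
      (1 + U * A * V * B).det ≠ 0) :
    maxSV A * maxSV B < 1 ∨ 1 < minSV A * minSV B := by
  match n, A, B, h with
  | 0, A, B, h =>
    left
    have hA : maxSV A = 0 := by
      unfold maxSV
      rw [Real.iSup_of_isEmpty, Real.sqrt_zero]
    have hB : maxSV B = 0 := by
      unfold maxSV
      rw [Real.iSup_of_isEmpty, Real.sqrt_zero]
    rw [hA, hB]
    norm_num
  | 1, A, B, h =>
    by_contra hcon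
    push_neg at hcon
    exact one_case A B h hcon.1 hcon.2
  | (m + 2), A, B, h =>
    by_contra hcon
    push_neg at hcon
    exact core_case A B h hcon.1 hcon.2
end

section
/- Let A, B ∈ M_n(ℂ) be such that there exists z on the unit circle with z A + z* A* ⪰ ε A* A for some ε > 0 and z* B + z B* ⪰ 0. Then det(I + T* A T S* B S) ≠ 0 for all invertible T, S ∈ M_n(ℂ). -/
open Matrix ComplexOrder

lemma aux_herm_dot {n : ℕ} (M : Matrix (Fin n) (Fin n) ℂ) (v : Fin n → ℂ) :
    star v ⬝ᵥ (Mᴴ *ᵥ v) = star (star v ⬝ᵥ (M *ᵥ v)) := by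
  rw [Matrix.dotProduct_mulVec, ← Matrix.star_mulVec, Matrix.star_dotProduct]

lemma aux_sq_dot {n : ℕ} (M : Matrix (Fin n) (Fin n) ℂ) (v : Fin n → ℂ) :
    star v ⬝ᵥ ((Mᴴ * M) *ᵥ v) = star (M *ᵥ v) ⬝ᵥ (M *ᵥ v) := by
  rw [← Matrix.mulVec_mulVec, Matrix.dotProduct_mulVec, ← Matrix.star_mulVec]

theorem stmt17 {n : ℕ} (A B : Matrix (Fin n) (Fin n) ℂ) (z : ℂ) (hz : ‖z‖ = 1)
    (ε : ℝ) (hε : 0 < ε)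
    (h1 : (z • A + (starRingEnd ℂ z) • Aᴴ - (ε : ℂ) • (Aᴴ * A)).PosSemidef)
    (h2 : ((starRingEnd ℂ z) • B + z • Bᴴ).PosSemidef) :
    ∀ T S : Matrix (Fin n) (Fin n) ℂ, IsUnit T → IsUnit S →
      (1 + Tᴴ * A * T * (Sᴴ * B * S)).det ≠ 0 := by
  intro T S hT hS hdet
  set A' : Matrix (Fin n) (Fin n) ℂ := Tᴴ * A * T with hA'
  set B' : Matrix (Fin n) (Fin n) ℂ := Sᴴ * B * S with hB'
  obtain ⟨x, hx0, hx⟩ := Matrix.exists_mulVec_eq_zero_iff.mpr hdet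
  set y : Fin n → ℂ := B' *ᵥ x with hy
  have hxA : A' *ᵥ y = -x := by
    have h := hx
    rw [Matrix.add_mulVec, Matrix.one_mulVec, ← Matrix.mulVec_mulVec] at h
    exact eq_neg_of_add_eq_zero_right h
  set a : ℂ := star y ⬝ᵥ (A' *ᵥ y) with ha
  -- congruence of h1 by T
  have h1' := h1.conjTranspose_mul_mul_same T
  have hM1 : Tᴴ * (z • A + (starRingEnd ℂ z) • Aᴴ - (ε : ℂ) • (Aᴴ * A)) * T
      = z • A' + (starRingEnd ℂ z) • A'ᴴ - (ε : ℂ) • ((A * T)ᴴ * (A * T)) := by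
    simp only [hA', Matrix.mul_add, Matrix.add_mul, Matrix.mul_sub, Matrix.sub_mul,
      Matrix.mul_smul, Matrix.smul_mul, Matrix.conjTranspose_mul,
      Matrix.conjTranspose_conjTranspose, Matrix.mul_assoc]
  have key1 := h1'.dotProduct_mulVec_nonneg y
  rw [hM1] at key1
  have hCy : (A * T) *ᵥ y ≠ 0 := by
    intro h0
    apply hx0
    have : A' *ᵥ y = 0 := by
      rw [show A' = Tᴴ * (A * T) from by rw [hA', Matrix.mul_assoc],
        ← Matrix.mulVec_mulVec, h0, Matrix.mulVec_zero]
    rw [hxA] at this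
    simpa using this.symm
  have hp : (0 : ℂ) < star ((A * T) *ᵥ y) ⬝ᵥ ((A * T) *ᵥ y) :=
    Matrix.dotProduct_star_self_pos_iff.mpr hCy
  have key1' : (0 : ℂ) < z * a + (starRingEnd ℂ z) * star a := by
    have hexp : star y ⬝ᵥ ((z • A' + (starRingEnd ℂ z) • A'ᴴ - (ε : ℂ) • ((A * T)ᴴ * (A * T))) *ᵥ y)
        = z * a + (starRingEnd ℂ z) * star a
          - (ε : ℂ) * (star ((A * T) *ᵥ y) ⬝ᵥ ((A * T) *ᵥ y)) := by
      simp only [Matrix.add_mulVec, Matrix.sub_mulVec, Matrix.smul_mulVec,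
        dotProduct_add, dotProduct_sub, dotProduct_smul, smul_eq_mul, ha,
        aux_herm_dot, aux_sq_dot]
    rw [hexp, sub_nonneg] at key1
    calc (0 : ℂ) < (ε : ℂ) * (star ((A * T) *ᵥ y) ⬝ᵥ ((A * T) *ᵥ y)) :=
          mul_pos (by exact_mod_cast hε) hp
      _ ≤ z * a + (starRingEnd ℂ z) * star a := key1
  -- congruence of h2 by S
  have h2' := h2.conjTranspose_mul_mul_same S
  have hM2 : Sᴴ * ((starRingEnd ℂ z) • B + z • Bᴴ) * S
      = (starRingEnd ℂ z) • B' + z • B'ᴴ := by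
    simp only [hB', Matrix.mul_add, Matrix.add_mul, Matrix.mul_smul, Matrix.smul_mul,
      Matrix.conjTranspose_mul, Matrix.conjTranspose_conjTranspose, Matrix.mul_assoc]
  have key2 := h2'.dotProduct_mulVec_nonneg x
  rw [hM2] at key2
  set b : ℂ := star x ⬝ᵥ (B' *ᵥ x) with hb
  have key2' : (0 : ℂ) ≤ (starRingEnd ℂ z) * b + z * star b := by
    have hexp : star x ⬝ᵥ (((starRingEnd ℂ z) • B' + z • B'ᴴ) *ᵥ x)
        = (starRingEnd ℂ z) * b + z * star b := by
      simp only [Matrix.add_mulVec, Matrix.smul_mulVec, dotProduct_add,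
        dotProduct_smul, smul_eq_mul, hb, aux_herm_dot]
    rwa [hexp] at key2
  -- relate a and b
  have hab : b = -star a := by
    have h1 : a = -(star y ⬝ᵥ x) := by rw [ha, hxA, dotProduct_neg]
    have h2 : b = star (star y ⬝ᵥ x) := by rw [hb, ← hy, Matrix.star_dotProduct]
    rw [h2, h1, star_neg, neg_neg]
  have hcontr : (starRingEnd ℂ z) * b + z * star b
      = -(z * a + (starRingEnd ℂ z) * star a) := by
    rw [hab]
    simp only [star_neg, star_star]
    ring
  rw [hcontr] at key2'
  have : z * a + (starRingEnd ℂ z) * star a ≤ 0 := by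
    have := neg_nonneg.mp key2'
    exact this
  exact (lt_irrefl (0:ℂ) (lt_of_lt_of_le key1' this)).elim
end
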